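/- Let Z0 and Z1 be cyclic flats of M⁺, let Z0 ∧ Z1 denote the union of all circuits of M⁺ contained in Z0 ∩ Z1 (the meet of Z0 and Z1 in the lattice of cyclic flats of M⁺), and let L* be the set of coloops of the restriction M|((Z0 − e) ∩ (Z1 − e)). Then ((Z0 − e) ∩ (Z1 − e)) − L* ⊆ (Z0 ∧ Z1) − e, and if (Z0 ∧ Z1) − e is a cyclic set of M then ((Z0 − e) ∩ (Z1 − e)) − L* = (Z0 ∧ Z1) − e. -/

import Mathlib

open Set Matroid
open scoped Classical

namespace Paper

variable {α : Type*}

/-- A circuit of a matroid: a minimal dependent set. -/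
def Circuit (M : Matroid α) (C : Set α) : Prop :=
  M.Dep C ∧ ∀ D ⊂ C, M.Indep D

/-- A coloop: an element of the ground set lying in no circuit. -/
def Coloop (M : Matroid α) (x : α) : Prop :=
  x ∈ M.E ∧ ∀ C, Circuit M C → x ∉ C

/-- The set of coloops of a matroid. -/
def coloops (M : Matroid α) : Set α := {x | Coloop M x}

/-- A cyclic set: a subset of the ground set each of whose elements lies in a
circuit contained in the set (equivalently, the restriction has no coloops). -/
def Cyclic (M : Matroid α) (X : Set α) : Prop :=
  X ⊆ M.E ∧ ∀ x ∈ X, ∃ C, Circuit M C ∧ C ⊆ X ∧ x ∈ C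

/-- A cyclic flat: a cyclic set that is also a flat. -/
def CyclicFlat (M : Matroid α) (X : Set α) : Prop :=
  Cyclic M X ∧ M.IsFlat X

/-- The rank of a set: the largest cardinality of an independent subset. -/
noncomputable def rk (M : Matroid α) (X : Set α) : ℕ :=
  sSup (Set.ncard '' {I | M.Indep I ∧ I ⊆ X})

/-- The nullity of a set: `n(X) = |X| − r(X)`. -/
noncomputable def nullity (M : Matroid α) (X : Set α) : ℤ :=
  (X.ncard : ℤ) - rk M X

/-- Deletion of a single element: `M \ e`. -/
noncomputable def deleteElem (M : Matroid α) (e : α) : Matroid α :=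
  M ↾ (M.E \ {e})
lemma circuit_restrict_iff {M : Matroid α} {R C : Set α} (hR : R ⊆ M.E) :
    Circuit (M ↾ R) C ↔ Circuit M C ∧ C ⊆ R := by
  constructor
  · rintro ⟨hdep, hmin⟩
    have hCR : C ⊆ R := hdep.subset_ground.trans_eq (by rfl : (M ↾ R).E = R)
    refine ⟨⟨⟨fun hI => hdep.not_indep (by simp [Matroid.restrict_indep_iff, hI, hCR]),
      hCR.trans hR⟩, fun D hD => ((hmin D hD).of_restrict)⟩, hCR⟩
  · rintro ⟨⟨hdep, hmin⟩, hCR⟩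
    refine ⟨⟨fun hI => hdep.not_indep hI.1, hCR.trans_eq (by rfl : (M ↾ R).E = R).symm⟩,
      fun D hD => Matroid.restrict_indep_iff.2 ⟨hmin D hD, hD.subset.trans hCR⟩⟩

theorem statement_8 (M : Matroid α) (hfin : M.E.Finite) (e : α) (he : e ∈ M.E)
    (Z0 Z1 : Set α) (h0 : CyclicFlat M Z0) (h1 : CyclicFlat M Z1)
    (meet : Set α) (hmeet : meet = ⋃₀ {C | Circuit M C ∧ C ⊆ Z0 ∩ Z1})
    (L : Set α)
    (hL : L = coloops (deleteElem M e ↾ ((Z0 \ {e}) ∩ (Z1 \ {e})))) :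
    ((Z0 \ {e}) ∩ (Z1 \ {e})) \ L ⊆ meet \ {e} ∧
    (Cyclic (deleteElem M e) (meet \ {e}) →
      ((Z0 \ {e}) ∩ (Z1 \ {e})) \ L = meet \ {e}) := by
  set X : Set α := (Z0 \ {e}) ∩ (Z1 \ {e}) with hX
  have hZ0E : Z0 ⊆ M.E := h0.1.1
  have hXsub : X ⊆ M.E \ {e} := fun x hx => ⟨hZ0E hx.1.1, hx.1.2⟩
  have hXE : X ⊆ M.E := hXsub.trans (diff_subset)
  have hNrw : deleteElem M e ↾ X = M ↾ X := by
    rw [deleteElem, Matroid.restrict_restrict_eq _ hXsub]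
  have hmeetZ : meet ⊆ Z0 ∩ Z1 := by
    rw [hmeet]; exact sUnion_subset fun C hC => hC.2
  -- first inclusion
  have hsub : X \ L ⊆ meet \ {e} := by
    rintro x ⟨hxX, hxL⟩
    rw [hL] at hxL
    simp only [coloops, mem_setOf_eq, Coloop, hNrw, not_and, not_forall] at hxL
    obtain ⟨C, hC, hxC⟩ := hxL (by simpa [Matroid.restrict_ground_eq] using hxX)
    simp only [not_not] at hxC
    obtain ⟨hCcirc, hCX⟩ := (circuit_restrict_iff hXE).1 hC
    refine ⟨?_, hxX.1.2⟩
    rw [hmeet]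
    exact ⟨C, ⟨hCcirc, hCX.trans fun y hy => ⟨hy.1.1, hy.2.1⟩⟩, hxC⟩
  refine ⟨hsub, fun hcyc => hsub.antisymm ?_⟩
  rintro x ⟨hxm, hxe⟩
  obtain ⟨C, hC, hCsub, hxC⟩ := hcyc.2 x ⟨hxm, hxe⟩
  have hmX : meet \ {e} ⊆ X := fun y hy =>
    ⟨⟨(hmeetZ hy.1).1, hy.2⟩, ⟨(hmeetZ hy.1).2, hy.2⟩⟩
  have hCX : C ⊆ X := hCsub.trans hmX
  obtain ⟨hCcirc, -⟩ := (circuit_restrict_iff (diff_subset : M.E \ {e} ⊆ M.E)).1 hC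
  refine ⟨hmX ⟨hxm, hxe⟩, ?_⟩
  rw [hL]
  simp only [coloops, mem_setOf_eq, Coloop, hNrw, not_and, not_forall]
  intro _
  exact ⟨C, (circuit_restrict_iff hXE).2 ⟨hCcirc, hCX⟩, not_not.2 hxC⟩

end Paper
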